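/- Let A₁, A₂, …, Aₘ (m ≥ 4) be subsets of a finite set V such that Aᵢ ∩ Aⱼ ≠ ∅ if and only if i = j or i ≡ j ± 1 (mod m). Then there is no bijection f : V → {1,…,n} under which every f(Aᵢ) is a (linear) interval. -/
import Mathlib


/-- A (linear) interval of `Fin n`. -/
def IsInterval {n : ℕ} (S : Set (Fin n)) : Prop :=
  ∃ i j : Fin n, S = Set.Icc i j

/-- A cyclic chain of `m ≥ 4` sets (each meeting exactly itself and its two cyclic
neighbors) cannot be realized as a family of intervals on a line. -/
theorem stmt_3 {V : Type*} [Fintype V] {m : ℕ} (hm : 4 ≤ m) (A : ZMod m → Set V)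
    (hpat : ∀ i j : ZMod m, (A i ∩ A j).Nonempty ↔ (i = j ∨ i = j + 1 ∨ j = i + 1)) :
    ¬ ∃ f : V ≃ Fin (Fintype.card V), ∀ i : ZMod m, IsInterval (⇑f '' A i) := by
  rintro ⟨f, hf⟩
  haveI : NeZero m := ⟨by omega⟩
  choose a b hab using hf
  -- each A i is nonempty
  have hmem : ∀ i, a i ∈ ⇑f '' A i := by
    intro i
    obtain ⟨x, hx, -⟩ := (hpat i i).mpr (Or.inl rfl)
    have : f x ∈ ⇑f '' A i := ⟨x, hx, rfl⟩
    rw [hab i] at this ⊢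
    exact Set.left_mem_Icc.mpr (le_trans this.1 this.2)
  -- pick k maximizing a k
  obtain ⟨k, -, hk⟩ := Finset.exists_max_image (Finset.univ : Finset (ZMod m)) a
    ⟨0, Finset.mem_univ 0⟩
  -- a k belongs to both neighbors' intervals
  have key : ∀ j : ZMod m, (A j ∩ A k).Nonempty → a k ∈ ⇑f '' A j := by
    intro j ⟨x, hxj, hxk⟩
    have h1 : f x ∈ ⇑f '' A j := ⟨x, hxj, rfl⟩
    have h2 : f x ∈ ⇑f '' A k := ⟨x, hxk, rfl⟩
    rw [hab j] at h1 ⊢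
    rw [hab k] at h2
    exact ⟨hk j (Finset.mem_univ j), le_trans h2.1 h1.2⟩
  have hL : a k ∈ ⇑f '' A (k - 1) := key _ <| (hpat (k - 1) k).mpr <| Or.inr <| Or.inr
    (by ring)
  have hR : a k ∈ ⇑f '' A (k + 1) := key _ <| (hpat (k + 1) k).mpr <| Or.inr <| Or.inl rfl
  obtain ⟨u, hu, huk⟩ := hL
  obtain ⟨v, hv, hvk⟩ := hR
  have huv : u = v := f.injective (huk.trans hvk.symm)
  have hne : (A (k - 1) ∩ A (k + 1)).Nonempty := ⟨u, hu, huv ▸ hv⟩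
  have hd : ∀ c : ℕ, 0 < c → c < m → ((c : ZMod m) ≠ 0) := by
    intro c hc hcm h
    rw [ZMod.natCast_eq_zero_iff] at h
    exact absurd (Nat.le_of_dvd hc h) (by omega)
  rcases (hpat (k - 1) (k + 1)).mp hne with h | h | h
  · exact hd 2 (by omega) (by omega) (by linear_combination -h)
  · exact hd 3 (by omega) (by omega) (by push_cast; linear_combination -h)
  · exact hd 1 (by omega) (by omega) (by linear_combination h)
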